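/- Under the KKT assumptions at a relaxation optimizer x_R with multipliers λ_A, λ_E ≥ 0, for every x with A x = b + u and E x ≤ f₀ and f(x) ≤ z_IP, one has f(x) ≥ z_R − ‖λ_A‖·‖u‖; in particular the value function φ(u) = inf{ f(x) : A x = b + u, E x ≤ f₀, x ∈ X } is bounded below (> −∞) for every u for which the feasible set is nonempty. -/

import Mathlib

open scoped RealInnerProductSpace Matrix

/-- Reinterpret a plain vector as an element of Euclidean space. -/
def toEuc {m : ℕ} (v : Fin m → ℝ) : EuclideanSpace ℝ (Fin m) := WithLp.toLp 2 v

/-- Proposition 2 of the paper, second part.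
Under KKT assumptions at the relaxation optimizer `x_R` with multipliers
`λ_A, λ_E ≥ 0`: every `x` with `A x = b + u`, `E x ≤ f₀`, `f(x) ≤ z_IP` satisfies
`f(x) ≥ z_R − ‖λ_A‖‖u‖`; in particular the value function
`φ(u) = inf{f(x) : A x = b + u, E x ≤ f₀, x ∈ X}` is bounded below whenever the
feasible set is nonempty. -/
theorem value_function_bounded_below
    {n m p : ℕ}
    (f : EuclideanSpace ℝ (Fin n) → ℝ) (g : EuclideanSpace ℝ (Fin n) → EuclideanSpace ℝ (Fin n))
    (hconv : ∀ x y : EuclideanSpace ℝ (Fin n), f x + ⟪g x, y - x⟫ ≤ f y)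
    (A : Matrix (Fin m) (Fin n) ℝ) (E : Matrix (Fin p) (Fin n) ℝ)
    (b : EuclideanSpace ℝ (Fin m)) (f₀ : Fin p → ℝ)
    (X : Set (EuclideanSpace ℝ (Fin n)))
    (hX : ∀ x ∈ X, ∀ i, E.mulVec x i ≤ f₀ i)
    (xR : EuclideanSpace ℝ (Fin n)) (zR zIP : ℝ)
    (lamA : EuclideanSpace ℝ (Fin m)) (lamE : Fin p → ℝ)
    (hfeasA : toEuc (A.mulVec xR) = b)
    (hfeasE : ∀ i, E.mulVec xR i ≤ f₀ i)
    (hval : f xR = zR)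
    (hstat : g xR = toEuc (A.transpose.mulVec lamA) - toEuc (E.transpose.mulVec lamE))
    (hcompE : lamE ⬝ᵥ (f₀ - E.mulVec xR) = 0)
    (hcompA : lamA ⬝ᵥ (toEuc (A.mulVec xR) - b) = 0)
    (hlamE : ∀ i, 0 ≤ lamE i) :
    (∀ (x : EuclideanSpace ℝ (Fin n)) (u : EuclideanSpace ℝ (Fin m)),
        toEuc (A.mulVec x) = b + u → (∀ i, E.mulVec x i ≤ f₀ i) → f x ≤ zIP →
        zR - ‖lamA‖ * ‖u‖ ≤ f x) ∧
    (∀ u : EuclideanSpace ℝ (Fin m),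
        (∃ x ∈ X, toEuc (A.mulVec x) = b + u) →
        BddBelow {w : ℝ | ∃ x ∈ X, toEuc (A.mulVec x) = b + u ∧ w = f x}) := by
  have key : ∀ (x : EuclideanSpace ℝ (Fin n)) (u : EuclideanSpace ℝ (Fin m)),
      toEuc (A.mulVec x) = b + u → (∀ i, E.mulVec x i ≤ f₀ i) →
      zR - ‖lamA‖ * ‖u‖ ≤ f x := by
    intro x u hAx hEx
    have h1 := hconv xR x
    -- the difference vector as a plain function
    set v : Fin n → ℝ := (x : Fin n → ℝ) - (xR : Fin n → ℝ) with hv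
    have hsub : ((x - xR : EuclideanSpace ℝ (Fin n)) : Fin n → ℝ) = v := rfl
    have hAv : A.mulVec v = (u : Fin m → ℝ) := by
      have hx : A.mulVec x = (b : Fin m → ℝ) + u := by simpa [toEuc] using congrArg (fun z : EuclideanSpace ℝ (Fin m) => (z : Fin m → ℝ)) hAx
      have hxR : A.mulVec xR = (b : Fin m → ℝ) := by simpa [toEuc] using congrArg (fun z : EuclideanSpace ℝ (Fin m) => (z : Fin m → ℝ)) hfeasA
      rw [hv, Matrix.mulVec_sub, hx, hxR]
      abel
    have hinnerA : ⟪toEuc (A.transpose.mulVec lamA), x - xR⟫ = ⟪lamA, u⟫ := by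
      have h2 : (A.transpose.mulVec lamA) ⬝ᵥ v = lamA ⬝ᵥ A.mulVec v := by
        rw [Matrix.mulVec_transpose, ← Matrix.dotProduct_mulVec]
      have h3 : lamA ⬝ᵥ A.mulVec v = (lamA : Fin m → ℝ) ⬝ᵥ (u : Fin m → ℝ) := by rw [hAv]
      simp only [PiLp.inner_apply, RCLike.inner_apply, conj_trivial]
      calc ∑ i, (x - xR) i * (toEuc (A.transpose.mulVec lamA)) i
          = (A.transpose.mulVec lamA) ⬝ᵥ v := by
            simp only [dotProduct, toEuc, WithLp.ofLp_toLp, hsub]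
            exact Finset.sum_congr rfl fun i _ => mul_comm _ _
        _ = (lamA : Fin m → ℝ) ⬝ᵥ (u : Fin m → ℝ) := by rw [h2, h3]
        _ = ∑ i, u i * lamA i := by
            simp only [dotProduct]
            exact Finset.sum_congr rfl fun i _ => mul_comm _ _
    have hinnerE : ⟪toEuc (E.transpose.mulVec lamE), x - xR⟫ ≤ 0 := by
      have h2 : (E.transpose.mulVec lamE) ⬝ᵥ v = lamE ⬝ᵥ E.mulVec v := by
        rw [Matrix.mulVec_transpose, ← Matrix.dotProduct_mulVec]
      have hEv : E.mulVec v = (E.mulVec x - f₀) + (f₀ - E.mulVec xR) := by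
        rw [hv, Matrix.mulVec_sub]; abel
      have h4 : lamE ⬝ᵥ E.mulVec v = lamE ⬝ᵥ (E.mulVec x - f₀) := by
        rw [hEv, dotProduct_add, hcompE, add_zero]
      have h5 : lamE ⬝ᵥ (E.mulVec x - f₀) ≤ 0 := by
        apply Finset.sum_nonpos
        intro i _
        have := hEx i
        have hli := hlamE i
        have : E.mulVec x i - f₀ i ≤ 0 := by linarith
        simpa [Pi.sub_apply] using mul_nonpos_of_nonneg_of_nonpos hli this
      calc ⟪toEuc (E.transpose.mulVec lamE), x - xR⟫
          = (E.transpose.mulVec lamE) ⬝ᵥ v := by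
            simp only [PiLp.inner_apply, RCLike.inner_apply, conj_trivial]
            simp only [dotProduct, toEuc, WithLp.ofLp_toLp, hsub]
            exact Finset.sum_congr rfl fun i _ => mul_comm _ _
        _ = lamE ⬝ᵥ (E.mulVec x - f₀) := by rw [h2, h4]
        _ ≤ 0 := h5
    have hinner : ⟪g xR, x - xR⟫ ≥ ⟪lamA, u⟫ := by
      rw [hstat, inner_sub_left, hinnerA]
      linarith
    have hcs : -(‖lamA‖ * ‖u‖) ≤ ⟪lamA, u⟫ := by
      have := abs_real_inner_le_norm lamA u
      have := neg_abs_le (⟪lamA, u⟫ : ℝ)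
      linarith
    calc zR - ‖lamA‖ * ‖u‖ = f xR + -(‖lamA‖ * ‖u‖) := by rw [hval]; ring
      _ ≤ f xR + ⟪g xR, x - xR⟫ := by linarith
      _ ≤ f x := h1
  refine ⟨fun x u h1 h2 _ => key x u h1 h2, fun u ⟨x₀, hx₀X, hx₀A⟩ => ?_⟩
  refine ⟨zR - ‖lamA‖ * ‖u‖, fun w hw => ?_⟩
  obtain ⟨x, hxX, hxA, rfl⟩ := hw
  exact key x u hxA (hX x hxX)
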